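/- The reversal transduction {(w, w^R) : w ∈ {a,b}*} is realized by a cellular automaton transducer in real time, i.e., it belongs to 𝒯(CAT_{rt,rt}). -/

import Mathlib

/-! Cellular automaton transducers (CAT). -/

/-- A cellular automaton transducer over input alphabet `A` and output alphabet `B`.
`S` is the finite set of cell states, `accept` the accepting states, `embed` views
input symbols as states, and `δ left self right = (new state, output)` where the
output component `none` means no output (`⊥`) and `some v` means the word `v` is emitted. -/
structure CAT (A B : Type) where
  S : Type
  fin : Fintype S
  accept : Set S
  embed : A → S
  δ : Option S → S → Option S → S × Option (List B)

/-- Left neighbour (boundary `#` is `none`). -/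
def nbL {σ : Type} {n : ℕ} (c : Fin n → σ) (i : Fin n) : Option σ :=
  if 0 < i.val then some (c ⟨i.val - 1, Nat.lt_of_le_of_lt (Nat.sub_le _ _) i.isLt⟩) else none

/-- Right neighbour (boundary `#` is `none`). -/
def nbR {σ : Type} {n : ℕ} (c : Fin n → σ) (i : Fin n) : Option σ :=
  if h : i.val + 1 < n then some (c ⟨i.val + 1, h⟩) else none

/-- The configuration (cell states and output registers) of `M` on input `w` at time `t`. -/
def CATconf {A B : Type} (M : CAT A B) (w : List A) :
    ℕ → (Fin w.length → M.S) × (Fin w.length → Option (List B))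
  | 0 => (fun i => M.embed (w.get i), fun _ => none)
  | t+1 =>
    let p := CATconf M w t
    (fun i => (M.δ (nbL p.1 i) (p.1 i) (nbR p.1 i)).1,
     fun i => match p.2 i with
       | some v => some v
       | none => (M.δ (nbL p.1 i) (p.1 i) (nbR p.1 i)).2)

/-- The input `w` is accepted within `tb` steps: the leftmost cell enters an accepting state. -/
def CATAcceptsBy {A B : Type} (M : CAT A B) (w : List A) (tb : ℕ) : Prop :=
  ∃ t ≤ tb, ∃ h : 0 < w.length, (CATconf M w t).1 ⟨0, h⟩ ∈ M.accept

/-- By time `tb` every cell has emitted an output and the concatenation is `v`. -/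
def CATOutputsBy {A B : Type} (M : CAT A B) (w : List A) (v : List B) (tb : ℕ) : Prop :=
  (∀ i, ((CATconf M w tb).2 i).isSome = true) ∧
  v = (List.ofFn (fun i => ((CATconf M w tb).2 i).getD [])).flatten

/-- The transduction realized by `M`. -/
def CATTransduction {A B : Type} (M : CAT A B) : Set (List A × List B) :=
  {p | (∃ t, CATAcceptsBy M p.1 t) ∧ ∃ t, CATOutputsBy M p.1 p.2 t}

/-- `M` has time complexity `(t_i, t_o)`. -/
def CATTimeBounded {A B : Type} (M : CAT A B) (t_i t_o : ℕ → ℕ) : Prop :=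
  ∀ p ∈ CATTransduction M,
    CATAcceptsBy M p.1 (t_i p.1.length) ∧ CATOutputsBy M p.1 p.2 (t_o p.1.length)

/-- The family of transductions computed by CATs whose input time satisfies `Ti`
and output time satisfies `To`. -/
def CATT (A B : Type) (Ti To : (ℕ → ℕ) → Prop) : Set (Set (List A × List B)) :=
  {T | ∃ M : CAT A B, ∃ t_i t_o, Ti t_i ∧ To t_o ∧ T = CATTransduction M ∧ CATTimeBounded M t_i t_o}

/-- Real time for CATs: `t(n) = n`. -/
def rtC : (ℕ → ℕ) → Prop := fun t => t = id

/-- Linear time: `t(n) = k·n` for some rational `k ≥ 1`. -/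
def lin : (ℕ → ℕ) → Prop := fun t => ∃ k : ℚ, 1 ≤ k ∧ ∀ n, t n = ⌈k * n⌉₊

/-! auxiliary construction -/

/-- The real-time reversal CAT.  State components `(L, R, Q)`:
`L` is the left-moving stream (`L i t = w[i+t]`), `R` is the stream reflected at the
left boundary with one step delay (`R i t = w[t-1-i]` for `t > i`), and `Q` is the
wavefront coming from the right boundary (`Q i t ⇔ 1 ≤ t ∧ n ≤ t + i`). -/
def revCAT : CAT Bool Bool where
  S := Option Bool × Option Bool × Bool
  fin := inferInstance
  accept := Set.univ
  embed b := (some b, none, false)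
  δ l s r :=
    ((match r with | some rs => rs.1 | none => none,
      match l with | some ls => ls.2.1 | none => s.1,
      match r with | some rs => rs.2.2 | none => true),
     match l, r with
     | none, none => some s.1.toList
     | none, some rs => if rs.2.2 then some s.1.toList else none
     | some ls, _ => if s.2.2 then some (ls.2.1.toList ++ s.2.1.toList) else none)

/-- Closed form for the state of cell `i` at time `t`. -/
def revSt (w : List Bool) (t i : ℕ) : Option Bool × Option Bool × Bool :=
  (w[i+t]?, if i < t then w[t-1-i]? else none, decide (1 ≤ t ∧ w.length ≤ t + i))

/-- The word eventually emitted by cell `i`. -/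
def revOut (w : List Bool) (i : ℕ) : List Bool :=
  (if 2*i ≤ w.length then w[w.length - 2*i]? else none).toList ++
  (if 2*i + 1 ≤ w.length then w[w.length - 1 - 2*i]? else none).toList

/-- Closed form for the output register of cell `i` at time `t`. -/
def revReg (w : List Bool) (t i : ℕ) : Option (List Bool) :=
  if (i = 0 ∧ w.length ≤ t) ∨ (1 ≤ i ∧ w.length + 1 ≤ t + i) then some (revOut w i)
  else none

theorem revCAT_conf (w : List Bool) (t : ℕ) :
    CATconf revCAT w t = (fun i => revSt w t i.val, fun i => revReg w t i.val) := by
  induction t with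
  | zero =>
      refine Prod.ext ?_ ?_ <;> funext i
      · show revCAT.embed (w.get i) = revSt w 0 i.val
        have h1 : w[i.val + 0]? = some (w.get i) := by
          simpa using List.getElem?_eq_getElem i.isLt
        simp [revCAT, revSt, h1]
      · show (none : Option (List Bool)) = revReg w 0 i.val
        have hi := i.isLt
        unfold revReg
        rw [if_neg (by omega)]
  | succ t ih =>
      have ih1 : (CATconf revCAT w t).1 = fun j : Fin w.length => revSt w t j.val := by
        rw [ih]
      have ih2 : (CATconf revCAT w t).2 = fun j : Fin w.length => revReg w t j.val := by
        rw [ih]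
      have hnbL : ∀ i : Fin w.length, nbL (σ := revCAT.S) (fun j : Fin w.length => revSt w t j.val) i =
          if 0 < i.val then some (revSt w t (i.val - 1)) else none := by
        intro i; unfold nbL; split <;> rfl
      have hnbR : ∀ i : Fin w.length, nbR (σ := revCAT.S) (fun j : Fin w.length => revSt w t j.val) i =
          if i.val + 1 < w.length then some (revSt w t (i.val + 1)) else none := by
        intro i; unfold nbR; split <;> rfl
      refine Prod.ext ?_ ?_ <;> funext i
      · -- state component
        show (revCAT.δ (nbL (CATconf revCAT w t).1 i) ((CATconf revCAT w t).1 i)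
            (nbR (CATconf revCAT w t).1 i)).1 = revSt w (t+1) i.val
        rw [ih1]
        simp only [hnbL, hnbR]
        have hi := i.isLt
        rcases Nat.eq_zero_or_pos i.val with h0 | h0 <;>
        rcases lt_or_ge (i.val + 1) w.length with h1 | h1
        · rw [if_neg (by omega), if_pos h1]
          show (w[i.val+1+t]?, w[i.val+t]?,
              decide (1 ≤ t ∧ w.length ≤ t + (i.val+1))) = revSt w (t+1) i.val
          unfold revSt
          rw [Prod.mk.injEq, Prod.mk.injEq]
          refine ⟨?_, ?_, ?_⟩
          · congr 1; omega
          · rw [if_pos (by omega)]; congr 1; omega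
          · rw [decide_eq_decide]; omega
        · rw [if_neg (by omega), if_neg (by omega)]
          show ((none : Option Bool), w[i.val+t]?, true) = revSt w (t+1) i.val
          unfold revSt
          rw [Prod.mk.injEq, Prod.mk.injEq]
          refine ⟨?_, ?_, ?_⟩
          · rw [List.getElem?_eq_none (l := w) (by omega)]
          · rw [if_pos (by omega)]; congr 1; omega
          · rw [eq_comm, decide_eq_true_eq]; omega
        · rw [if_pos h0, if_pos h1]
          show (w[i.val+1+t]?, (if i.val-1 < t then w[t-1-(i.val-1)]? else none),
              decide (1 ≤ t ∧ w.length ≤ t + (i.val+1))) = revSt w (t+1) i.val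
          unfold revSt
          rw [Prod.mk.injEq, Prod.mk.injEq]
          refine ⟨?_, ?_, ?_⟩
          · congr 1; omega
          · by_cases hit : i.val - 1 < t
            · rw [if_pos hit, if_pos (by omega)]; congr 1; omega
            · rw [if_neg hit, if_neg (by omega)]
          · rw [decide_eq_decide]; omega
        · rw [if_pos h0, if_neg (by omega)]
          show ((none : Option Bool), (if i.val-1 < t then w[t-1-(i.val-1)]? else none),
              true) = revSt w (t+1) i.val
          unfold revSt
          rw [Prod.mk.injEq, Prod.mk.injEq]
          refine ⟨?_, ?_, ?_⟩
          · rw [List.getElem?_eq_none (l := w) (by omega)]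
          · by_cases hit : i.val - 1 < t
            · rw [if_pos hit, if_pos (by omega)]; congr 1; omega
            · rw [if_neg hit, if_neg (by omega)]
          · rw [eq_comm, decide_eq_true_eq]; omega
      · -- register component
        have h2step : (CATconf revCAT w (t+1)).2 i = (match (CATconf revCAT w t).2 i with
            | some v => some v
            | none => (revCAT.δ (nbL (CATconf revCAT w t).1 i) ((CATconf revCAT w t).1 i)
                (nbR (CATconf revCAT w t).1 i)).2) := by
          simp only [CATconf]
          cases (CATconf revCAT w t).2 i <;> rfl
        show (CATconf revCAT w (t+1)).2 i = revReg w (t+1) i.val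
        rw [h2step, ih1, ih2]
        simp only [hnbL, hnbR]
        have hi := i.isLt
        by_cases hc : (i.val = 0 ∧ w.length ≤ t) ∨ (1 ≤ i.val ∧ w.length + 1 ≤ t + i.val)
        · have h1 : revReg w t i.val = some (revOut w i.val) := by
            unfold revReg; rw [if_pos hc]
          have h2 : revReg w (t+1) i.val = some (revOut w i.val) := by
            unfold revReg; rw [if_pos (by omega)]
          rw [h1, h2]
        · have h1 : revReg w t i.val = none := by unfold revReg; rw [if_neg hc]
          rw [h1]
          show (revCAT.δ (if 0 < i.val then some (revSt w t (i.val - 1)) else none)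
              (revSt w t i.val)
              (if i.val + 1 < w.length then some (revSt w t (i.val + 1)) else none)).2
            = revReg w (t+1) i.val
          rcases Nat.eq_zero_or_pos i.val with h0 | h0 <;>
          rcases lt_or_ge (i.val + 1) w.length with hr | hr
          · -- i = 0, n >= 2
            rw [if_neg (by omega), if_pos hr]
            show (if decide (1 ≤ t ∧ w.length ≤ t + (i.val+1)) = true
                then some (w[i.val+t]?).toList else none) = revReg w (t+1) i.val
            simp only [decide_eq_true_eq]
            by_cases hq : 1 ≤ t ∧ w.length ≤ t + (i.val + 1)
            · have h2 : revReg w (t+1) i.val = some (revOut w i.val) := by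
                unfold revReg; rw [if_pos (by omega)]
              rw [if_pos hq, h2]
              unfold revOut
              rw [if_pos (by omega), if_pos (by omega),
                  List.getElem?_eq_none (l := w) (i := w.length - 2*i.val) (by omega)]
              simp only [Option.toList_none, List.nil_append]
              rw [show i.val + t = w.length - 1 - 2*i.val by omega]
            · have h2 : revReg w (t+1) i.val = none := by
                unfold revReg; rw [if_neg (by omega)]
              rw [if_neg hq, h2]
          · -- i = 0, n = 1
            rw [if_neg (by omega), if_neg (by omega)]
            show some (w[i.val+t]?).toList = revReg w (t+1) i.val
            have h2 : revReg w (t+1) i.val = some (revOut w i.val) := by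
              unfold revReg; rw [if_pos (by omega)]
            rw [h2]
            unfold revOut
            rw [if_pos (by omega), if_pos (by omega),
                List.getElem?_eq_none (l := w) (i := w.length - 2*i.val) (by omega)]
            simp only [Option.toList_none, List.nil_append]
            rw [show i.val + t = w.length - 1 - 2*i.val by omega]
          all_goals (
            -- i >= 1
            rw [if_pos h0]
            first
              | rw [if_pos hr]
              | rw [if_neg (by omega)]
            show (if decide (1 ≤ t ∧ w.length ≤ t + i.val) = true
                then some ((if i.val-1 < t then w[t-1-(i.val-1)]? else none).toList ++
                  (if i.val < t then w[t-1-i.val]? else none).toList)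
                else none) = revReg w (t+1) i.val
            simp only [decide_eq_true_eq]
            by_cases hq : 1 ≤ t ∧ w.length ≤ t + i.val
            · have h2 : revReg w (t+1) i.val = some (revOut w i.val) := by
                unfold revReg; rw [if_pos (by omega)]
              rw [if_pos hq, h2]
              refine congrArg some ?_
              unfold revOut
              congr 1
              · by_cases hg : i.val - 1 < t
                · rw [if_pos hg, if_pos (show 2*i.val ≤ w.length by omega),
                      show t-1-(i.val-1) = w.length - 2*i.val by omega]
                · rw [if_neg hg, if_neg (show ¬ (2*i.val ≤ w.length) by omega)]
              · by_cases hg : i.val < t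
                · rw [if_pos hg, if_pos (show 2*i.val + 1 ≤ w.length by omega),
                      show t-1-i.val = w.length - 1 - 2*i.val by omega]
                · rw [if_neg hg, if_neg (show ¬ (2*i.val + 1 ≤ w.length) by omega)]
            · have h2 : revReg w (t+1) i.val = none := by
                unfold revReg; rw [if_neg (by omega)]
              rw [if_neg hq, h2])

lemma take_two_of_getElem? {α : Type} (l : List α) :
    l.take 2 = (l[0]?).toList ++ (l[1]?).toList := by
  match l with
  | [] => rfl
  | [a] => rfl
  | a :: b :: c => simp

lemma rev_chunks {α : Type} (v : List α) (m : ℕ) :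
    (List.map (fun i => (v[2*i+1]?).toList ++ (v[2*i+2]?).toList)
      (List.range m)).flatten = (v.drop 1).take (2*m) := by
  induction m with
  | zero => simp
  | succ m ih =>
      rw [List.range_succ, List.map_append, List.flatten_append, ih]
      rw [show 2*(m+1) = 2*m + 2 by ring, List.take_add]
      congr 1
      rw [List.drop_drop, take_two_of_getElem?, List.getElem?_drop, List.getElem?_drop]
      simp only [List.map_cons, List.map_nil, List.flatten_cons, List.flatten_nil,
        List.append_nil]
      congr 3 <;> omega

lemma revOut_flatten (w : List Bool) (hw : w ≠ []) :
    (List.ofFn (fun i : Fin w.length => revOut w i.val)).flatten = w.reverse := by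
  have hn : 1 ≤ w.length := List.length_pos_iff.mpr hw
  have hvlen : w.reverse.length = w.length := List.length_reverse
  have hpt : ∀ i : ℕ, i < w.length → revOut w i =
      (if i = 0 then (w.reverse[0]?).toList
       else (w.reverse[2*i-1]?).toList ++ (w.reverse[2*i]?).toList) := by
    intro i hi
    unfold revOut
    by_cases h0 : i = 0
    · subst h0
      rw [if_pos rfl, if_pos (by omega), if_pos (by omega)]
      rw [List.getElem?_eq_none (l := w) (by omega)]
      rw [List.getElem?_reverse (by omega)]
      simp only [Option.toList_none, List.nil_append]
      all_goals (congr 2 <;> omega)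
    · rw [if_neg h0]
      congr 1
      · by_cases hg : 2*i ≤ w.length
        · rw [if_pos hg, List.getElem?_reverse (by omega)]
          all_goals (congr 2 <;> omega)
        · rw [if_neg hg, List.getElem?_eq_none (l := w.reverse) (by omega)]
      · by_cases hg : 2*i + 1 ≤ w.length
        · rw [if_pos hg, List.getElem?_reverse (by omega)]
          all_goals (congr 2 <;> omega)
        · rw [if_neg hg, List.getElem?_eq_none (l := w.reverse) (by omega)]
  have hofn : List.ofFn (fun i : Fin w.length => revOut w i.val) =
      List.map (fun i : ℕ => (if i = 0 then (w.reverse[0]?).toList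
        else (w.reverse[2*i-1]?).toList ++ (w.reverse[2*i]?).toList)) (List.range w.length) := by
    apply List.ext_getElem
    · simp
    · intro k h1 h2
      simp only [List.getElem_ofFn, List.getElem_map, List.getElem_range]
      exact hpt k (by simpa using h1)
  rw [hofn]
  obtain ⟨m, hm⟩ : ∃ m, w.length = m + 1 := ⟨w.length - 1, by omega⟩
  rw [hm, List.range_succ_eq_map, List.map_cons, List.flatten_cons, if_pos rfl]
  rw [List.map_map]
  have hcomp : ((fun i : ℕ => (if i = 0 then (w.reverse[0]?).toList
        else (w.reverse[2*i-1]?).toList ++ (w.reverse[2*i]?).toList)) ∘ Nat.succ)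
      = fun i : ℕ => (w.reverse[2*i+1]?).toList ++ (w.reverse[2*i+2]?).toList := by
    funext i
    simp only [Function.comp_apply]
    rw [if_neg (by omega)]
    congr 3 <;> omega
  rw [hcomp]
  rw [rev_chunks (w.reverse) m]
  rw [List.take_of_length_le (by rw [List.length_drop, List.length_reverse]; omega)]
  obtain ⟨a, tl, hv⟩ : ∃ a tl, w.reverse = a :: tl := by
    cases hvr : w.reverse with
    | nil => exact absurd (List.reverse_eq_nil_iff.mp hvr) hw
    | cons a tl => exact ⟨a, tl, rfl⟩
  rw [hv]
  simp

lemma revCAT_accepts (w : List Bool) (hw : 0 < w.length) (tb : ℕ) :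
    CATAcceptsBy revCAT w tb :=
  ⟨0, Nat.zero_le _, hw, Set.mem_univ _⟩

lemma revCAT_outputs (w : List Bool) (hw : w ≠ []) (t : ℕ) (ht : w.length ≤ t) :
    CATOutputsBy revCAT w w.reverse t := by
  have hreg : ∀ i : Fin w.length, (CATconf revCAT w t).2 i = some (revOut w i.val) := by
    intro i
    rw [revCAT_conf]
    show revReg w t i.val = _
    unfold revReg
    rw [if_pos (by rcases Nat.eq_zero_or_pos i.val with h | h <;> [left; right] <;>
      constructor <;> omega)]
  constructor
  · intro i; rw [hreg i]; rfl
  · have hfun : (fun i : Fin w.length => ((CATconf revCAT w t).2 i).getD [])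
        = (fun i : Fin w.length => revOut w i.val) := by
      funext i
      rw [hreg i]
      rfl
    rw [hfun, revOut_flatten w hw]

lemma revCAT_outputs_unique (w v : List Bool) (t : ℕ) (hw : w ≠ [])
    (h : CATOutputsBy revCAT w v t) : v = w.reverse := by
  obtain ⟨hs, hv⟩ := h
  have hn : 0 < w.length := List.length_pos_iff.mpr hw
  have h0 : (revReg w t (0 : ℕ)).isSome = true := by
    have := hs ⟨0, hn⟩
    rw [revCAT_conf] at this
    exact this
  have hnt : w.length ≤ t := by
    by_contra hcon
    unfold revReg at h0
    rw [if_neg (by omega)] at h0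
    simp at h0
  rw [hv]
  exact (revCAT_outputs w hw t hnt).2.symm

lemma revCAT_transduction :
    CATTransduction revCAT =
      {p : List Bool × List Bool | ∃ w : List Bool, w ≠ [] ∧ p = (w, w.reverse)} := by
  ext ⟨w, v⟩
  constructor
  · rintro ⟨⟨t1, ht1⟩, ⟨t2, ht2⟩⟩
    obtain ⟨t, -, hpos, -⟩ := ht1
    have hw : w ≠ [] := by
      intro h; subst h; simp at hpos
    exact ⟨w, hw, by rw [revCAT_outputs_unique w v t2 hw ht2]⟩
  · rintro ⟨w0, hw0, hp⟩
    obtain ⟨rfl, rfl⟩ : w = w0 ∧ v = w0.reverse := by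
      constructor <;> [exact congrArg Prod.fst hp; exact congrArg Prod.snd hp]
    exact ⟨⟨0, revCAT_accepts _ (List.length_pos_iff.mpr hw0) 0⟩,
      ⟨_, revCAT_outputs _ hw0 _ le_rfl⟩⟩

theorem reversal_transduction_in_CAT_rt_rt' :
    {p : List Bool × List Bool | ∃ w : List Bool, w ≠ [] ∧ p = (w, w.reverse)} ∈
      CATT Bool Bool rtC rtC := by
  refine ⟨revCAT, id, id, rfl, rfl, revCAT_transduction.symm, ?_⟩
  intro p hp
  rw [revCAT_transduction] at hp
  obtain ⟨w, hw, hp⟩ := hp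
  have h1 : p.1 = w := congrArg Prod.fst hp
  have h2 : p.2 = w.reverse := congrArg Prod.snd hp
  rw [h1, h2]
  exact ⟨revCAT_accepts _ (List.length_pos_iff.mpr hw) _,
    revCAT_outputs _ hw _ le_rfl⟩

/-- the reversal transduction `{(w, w^R) : w ∈ {a,b}*}` belongs to
`𝒯(CAT_{rt,rt})` (as usual, transductions are considered up to the empty input word,
which a cellular array cannot hold). The alphabet `{a,b}` is modelled by `Bool`. -/
theorem reversal_transduction_in_CAT_rt_rt :
    {p : List Bool × List Bool | ∃ w : List Bool, w ≠ [] ∧ p = (w, w.reverse)} ∈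
      CATT Bool Bool rtC rtC :=
  reversal_transduction_in_CAT_rt_rt'
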